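/- The following Christoffel symbols of the metric G vanish identically on ℝ^{n+4}: Γ^î_{ĵ k̂} = 0 and Γ^î_{ĵ, n+3} = 0 for all î, ĵ, k̂ ∈ {3, …, n+2}; Γ^{n+3}_{a b} = Γ^{n+4}_{a b} = 0 for all a, b ∈ {1, …, n+4}; and Γ^a_{1 b} = Γ^a_{2 b} = 0 for all a, b ∈ {1, …, n+4}. -/
import Mathlib


namespace HolPaper

open Matrix

/-- Points of `ℝ^{n+4}`, with coordinates indexed by `Fin (n+4)`.
The paper's index `1` is `p1`, `2` is `p2`, `î ∈ {3,…,n+2}` is `ehat i` for `i : Fin n`,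
`n+3` is `q1` and `n+4` is `q2`. -/
abbrev Pt (n : ℕ) := Fin (n + 4) → ℝ

def p1 (n : ℕ) : Fin (n + 4) := ⟨0, by omega⟩
def p2 (n : ℕ) : Fin (n + 4) := ⟨1, by omega⟩
def ehat {n : ℕ} (i : Fin n) : Fin (n + 4) := ⟨i.1 + 2, by have := i.isLt; omega⟩
def q1 (n : ℕ) : Fin (n + 4) := ⟨n + 2, by omega⟩
def q2 (n : ℕ) : Fin (n + 4) := ⟨n + 3, by omega⟩

noncomputable section

variable {n N : ℕ}

/-- `u^î(x) = Σ_ĵ Σ_α (A_α)_{î-2,ĵ-2} x^ĵ (x^{n+3})^α`. -/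
def u (A : Fin N → Matrix (Fin n) (Fin n) ℝ) (i : Fin n) (x : Pt n) : ℝ :=
  ∑ j : Fin n, ∑ α : Fin N, A α i j * x (ehat j) * x (q1 n) ^ (α.1 + 1)

/-- `F(x) = Σ_î (x^î)²`. -/
def Fq (n : ℕ) (x : Pt n) : ℝ := ∑ i : Fin n, x (ehat i) ^ 2

/-- The Gram matrix `G(x)` of the metric. -/
def Gmet (A : Fin N → Matrix (Fin n) (Fin n) ℝ) (x : Pt n) :
    Matrix (Fin (n + 4)) (Fin (n + 4)) ℝ := fun a b =>
  (if (a = p1 n ∧ b = q1 n) ∨ (a = q1 n ∧ b = p1 n) then (1 : ℝ) else 0)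
  + (if (a = p2 n ∧ b = q2 n) ∨ (a = q2 n ∧ b = p2 n) then (1 : ℝ) else 0)
  + (∑ i : Fin n, if a = ehat i ∧ b = ehat i then (1 : ℝ) else 0)
  + (∑ i : Fin n, if (a = ehat i ∧ b = q2 n) ∨ (a = q2 n ∧ b = ehat i) then u A i x else 0)
  + (if (a = q1 n ∧ b = q1 n) ∨ (a = q2 n ∧ b = q2 n) then Fq n x else 0)

/-- Partial derivative `∂_b f` of a function on `ℝ^{n+4}`. -/
def pd (b : Fin (n + 4)) (f : Pt n → ℝ) (x : Pt n) : ℝ :=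
  fderiv ℝ f x (Pi.single b 1)

/-- Christoffel symbols
`Γ^a_{bc} = ½ Σ_d G^{ad} (∂_b G_{dc} + ∂_c G_{bd} − ∂_d G_{bc})`. -/
def Γchr (A : Fin N → Matrix (Fin n) (Fin n) ℝ) (a b c : Fin (n + 4)) (x : Pt n) : ℝ :=
  (1 / 2) * ∑ d : Fin (n + 4), (Gmet A x)⁻¹ a d *
    (pd b (fun y => Gmet A y d c) x + pd c (fun y => Gmet A y b d) x
      - pd d (fun y => Gmet A y b c) x)

/-- Curvature components
`R^a_{b,c,d} = ∂_c Γ^a_{db} − ∂_d Γ^a_{cb} + Σ_e (Γ^a_{ce} Γ^e_{db} − Γ^a_{de} Γ^e_{cb})`. -/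
def Rcurv (A : Fin N → Matrix (Fin n) (Fin n) ℝ) (a b c d : Fin (n + 4)) (x : Pt n) : ℝ :=
  pd c (Γchr A a d b) x - pd d (Γchr A a c b) x
  + ∑ e : Fin (n + 4), (Γchr A a c e x * Γchr A e d b x - Γchr A a d e x * Γchr A e c b x)

/-- Auxiliary recursion for iterated covariant derivatives of the curvature; the list of
differentiation indices is stored in *reverse* order (most recent derivative first). -/
def covRAux (A : Fin N → Matrix (Fin n) (Fin n) ℝ) :
    Fin (n + 4) → Fin (n + 4) → Fin (n + 4) → Fin (n + 4) → List (Fin (n + 4)) → Pt n → ℝ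
  | a, b, c, d, [], x => Rcurv A a b c d x
  | a, b, c, d, f :: fs, x =>
      pd f (covRAux A a b c d fs) x
      + ∑ l : Fin (n + 4), Γchr A a f l x * covRAux A l b c d fs x
      - ∑ l : Fin (n + 4), Γchr A l f b x * covRAux A a l c d fs x
      - ∑ l : Fin (n + 4), Γchr A l f c x * covRAux A a b l d fs x
      - ∑ l : Fin (n + 4), Γchr A l f d x * covRAux A a b c l fs x
      - ∑ s : Fin fs.length, ∑ l : Fin (n + 4),
          Γchr A l f (fs.get s) x * covRAux A a b c d (fs.set s l) x
  termination_by a b c d fs => fs.length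
  decreasing_by all_goals simp [List.length_set]

/-- `covR A a b c d [f_1, …, f_r] x` is the component `R^a_{b,c,d;f_1;…;f_r}(x)` of the
`r`-th covariant derivative of the curvature tensor (indices in natural order). -/
def covR (A : Fin N → Matrix (Fin n) (Fin n) ℝ) (a b c d : Fin (n + 4))
    (fs : List (Fin (n + 4))) (x : Pt n) : ℝ :=
  covRAux A a b c d fs.reverse x




/-! ### Auxiliary lemmas -/

section Aux

variable {n N : ℕ}

@[simp] lemma p1_ne_p2 : p1 n ≠ p2 n := by simp [p1, p2, Fin.ext_iff]
@[simp] lemma p2_ne_p1 : p2 n ≠ p1 n := by simp [p1, p2, Fin.ext_iff]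
@[simp] lemma p1_ne_q1 : p1 n ≠ q1 n := by simp [p1, q1, Fin.ext_iff]
@[simp] lemma q1_ne_p1 : q1 n ≠ p1 n := by simp [p1, q1, Fin.ext_iff]
@[simp] lemma p1_ne_q2 : p1 n ≠ q2 n := by simp [p1, q2, Fin.ext_iff]
@[simp] lemma q2_ne_p1 : q2 n ≠ p1 n := by simp [p1, q2, Fin.ext_iff]
@[simp] lemma p2_ne_q1 : p2 n ≠ q1 n := by simp [p2, q1, Fin.ext_iff]
@[simp] lemma q1_ne_p2 : q1 n ≠ p2 n := by simp [p2, q1, Fin.ext_iff]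
@[simp] lemma p2_ne_q2 : p2 n ≠ q2 n := by simp [p2, q2, Fin.ext_iff]
@[simp] lemma q2_ne_p2 : q2 n ≠ p2 n := by simp [p2, q2, Fin.ext_iff]
@[simp] lemma q1_ne_q2 : q1 n ≠ q2 n := by simp [q1, q2, Fin.ext_iff]
@[simp] lemma q2_ne_q1 : q2 n ≠ q1 n := by simp [q1, q2, Fin.ext_iff]
@[simp] lemma ehat_ne_p1 (i : Fin n) : ehat i ≠ p1 n := by simp [ehat, p1, Fin.ext_iff]
@[simp] lemma p1_ne_ehat (i : Fin n) : p1 n ≠ ehat i := by simp [ehat, p1, Fin.ext_iff]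
@[simp] lemma ehat_ne_p2 (i : Fin n) : ehat i ≠ p2 n := by simp [ehat, p2, Fin.ext_iff]
@[simp] lemma p2_ne_ehat (i : Fin n) : p2 n ≠ ehat i := by simp [ehat, p2, Fin.ext_iff]
@[simp] lemma ehat_ne_q1 (i : Fin n) : ehat i ≠ q1 n := by
  intro h; have h' := congrArg Fin.val h
  simp only [ehat, q1] at h'; have := i.isLt; omega
@[simp] lemma q1_ne_ehat (i : Fin n) : q1 n ≠ ehat i := (ehat_ne_q1 i).symm
@[simp] lemma ehat_ne_q2 (i : Fin n) : ehat i ≠ q2 n := by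
  intro h; have h' := congrArg Fin.val h
  simp only [ehat, q2] at h'; have := i.isLt; omega
@[simp] lemma q2_ne_ehat (i : Fin n) : q2 n ≠ ehat i := (ehat_ne_q2 i).symm
@[simp] lemma ehat_inj {i j : Fin n} : ehat i = ehat j ↔ i = j := by
  simp [ehat, Fin.ext_iff]

lemma cases_fin (a : Fin (n + 4)) :
    a = p1 n ∨ a = p2 n ∨ (∃ i, a = ehat i) ∨ a = q1 n ∨ a = q2 n := by
  have ha := a.isLt
  by_cases h0 : a.1 = 0
  · exact Or.inl (Fin.ext h0)
  by_cases h1 : a.1 = 1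
  · exact Or.inr (Or.inl (Fin.ext h1))
  by_cases hq1 : a.1 = n + 2
  · exact Or.inr (Or.inr (Or.inr (Or.inl (Fin.ext hq1))))
  by_cases hq2 : a.1 = n + 3
  · exact Or.inr (Or.inr (Or.inr (Or.inr (Fin.ext hq2))))
  · refine Or.inr (Or.inr (Or.inl ⟨⟨a.1 - 2, by omega⟩, Fin.ext ?_⟩))
    simp [ehat]; omega

lemma sum_split (f : Fin (n + 4) → ℝ) :
    ∑ a, f a = f (p1 n) + f (p2 n) + (∑ i : Fin n, f (ehat i)) + f (q1 n) + f (q2 n) := by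
  rw [Fin.sum_univ_castSucc, Fin.sum_univ_castSucc, Fin.sum_univ_succ, Fin.sum_univ_succ]
  have h1 : ∀ i : Fin n, (((i.succ.succ : Fin (n + 2)).castSucc).castSucc : Fin (n + 4)) = ehat i := by
    intro i; ext; simp [ehat]
  have e0 : (((0 : Fin (n + 2)).castSucc).castSucc : Fin (n + 4)) = p1 n := by ext; simp [p1]
  have e1 : ((((0 : Fin (n + 1)).succ : Fin (n + 2)).castSucc).castSucc : Fin (n + 4)) = p2 n := by
    ext; simp [p2]
  have e2 : ((Fin.last (n + 2)).castSucc : Fin (n + 4)) = q1 n := by ext; simp [q1]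
  have e3 : (Fin.last (n + 3) : Fin (n + 4)) = q2 n := by ext; simp [q2]
  simp only [h1, e0, e1, e2, e3]
  ring


lemma sum_ite_and {f : Fin n → ℝ} {P : Fin n → Prop} [DecidablePred P] (i : Fin n) :
    (∑ m, if i = m ∧ P m then f m else 0) = if P i then f i else 0 := by
  rw [Finset.sum_eq_single i]
  · simp
  · intro m _ hmi; rw [if_neg]; rintro ⟨h1, -⟩; exact hmi h1.symm
  · intro h; simp at h

variable (A : Fin N → Matrix (Fin n) (Fin n) ℝ)

/-! #### Row values of `Gmet` -/

lemma Gmet_p1 (x : Pt n) (d : Fin (n + 4)) :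
    Gmet A x (p1 n) d = if d = q1 n then 1 else 0 := by
  simp [Gmet]

lemma Gmet_p2 (x : Pt n) (d : Fin (n + 4)) :
    Gmet A x (p2 n) d = if d = q2 n then 1 else 0 := by
  simp [Gmet]

lemma Gmet_col_p1 (x : Pt n) (d : Fin (n + 4)) :
    Gmet A x d (p1 n) = if d = q1 n then 1 else 0 := by
  simp [Gmet]

lemma Gmet_col_p2 (x : Pt n) (d : Fin (n + 4)) :
    Gmet A x d (p2 n) = if d = q2 n then 1 else 0 := by
  simp [Gmet]

lemma Gmet_ehat (x : Pt n) (i : Fin n) (d : Fin (n + 4)) :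
    Gmet A x (ehat i) d = (if d = ehat i then 1 else 0) + (if d = q2 n then u A i x else 0) := by
  unfold Gmet
  simp only [ehat_inj, ehat_ne_p1, ehat_ne_p2, ehat_ne_q1, ehat_ne_q2, p1_ne_ehat, p2_ne_ehat,
    q1_ne_ehat, q2_ne_ehat, false_and, and_false, or_false, false_or, if_false, if_neg,
    sum_ite_and]
  ring

lemma Gmet_q1 (x : Pt n) (d : Fin (n + 4)) :
    Gmet A x (q1 n) d = (if d = p1 n then 1 else 0) + (if d = q1 n then Fq n x else 0) := by
  simp [Gmet]

lemma Gmet_q2 (x : Pt n) (d : Fin (n + 4)) :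
    Gmet A x (q2 n) d = (if d = p2 n then 1 else 0)
      + (∑ i, if d = ehat i then u A i x else 0) + (if d = q2 n then Fq n x else 0) := by
  simp [Gmet]

/-! #### The inverse matrix -/

/-- Explicit inverse of `Gmet`. -/
def Ginv (x : Pt n) : Matrix (Fin (n + 4)) (Fin (n + 4)) ℝ := fun a b =>
  (if a = p1 n ∧ b = q1 n then 1 else 0)
  + (if a = p1 n ∧ b = p1 n then -Fq n x else 0)
  + (if a = p2 n ∧ b = q2 n then 1 else 0)
  + (if a = p2 n ∧ b = p2 n then (∑ i, u A i x ^ 2) - Fq n x else 0)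
  + (∑ i, if a = p2 n ∧ b = ehat i then -u A i x else 0)
  + (∑ i, if a = ehat i ∧ b = ehat i then 1 else 0)
  + (∑ i, if a = ehat i ∧ b = p2 n then -u A i x else 0)
  + (if a = q1 n ∧ b = p1 n then 1 else 0)
  + (if a = q2 n ∧ b = p2 n then 1 else 0)

lemma Ginv_p1 (x : Pt n) (b : Fin (n + 4)) :
    Ginv A x (p1 n) b = (if b = q1 n then 1 else 0) + (if b = p1 n then -Fq n x else 0) := by
  simp [Ginv]

lemma Ginv_p2 (x : Pt n) (b : Fin (n + 4)) :
    Ginv A x (p2 n) b = (if b = q2 n then 1 else 0)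
      + (if b = p2 n then (∑ i, u A i x ^ 2) - Fq n x else 0)
      + (∑ i, if b = ehat i then -u A i x else 0) := by
  simp [Ginv]

lemma Ginv_ehat (x : Pt n) (i : Fin n) (b : Fin (n + 4)) :
    Ginv A x (ehat i) b = (if b = ehat i then 1 else 0) + (if b = p2 n then -u A i x else 0) := by
  unfold Ginv
  simp only [ehat_inj, ehat_ne_p1, ehat_ne_p2, ehat_ne_q1, ehat_ne_q2, false_and, and_false,
    or_false, false_or, if_false, sum_ite_and, Finset.sum_const_zero]
  ring

lemma Ginv_q1 (x : Pt n) (b : Fin (n + 4)) :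
    Ginv A x (q1 n) b = if b = p1 n then 1 else 0 := by
  simp [Ginv]

lemma Ginv_q2 (x : Pt n) (b : Fin (n + 4)) :
    Ginv A x (q2 n) b = if b = p2 n then 1 else 0 := by
  simp [Ginv]

lemma G_mul_Ginv (x : Pt n) : Gmet A x * Ginv A x = 1 := by
  ext a b
  rw [Matrix.mul_apply, Matrix.one_apply]
  rcases cases_fin a with ha | ha | ⟨i, ha⟩ | ha | ha <;> subst ha
  · simp only [Gmet_p1, ite_mul, one_mul, zero_mul, Finset.sum_ite_eq', Finset.mem_univ,
      if_true, Ginv_q1]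
    simp [eq_comm]
  · simp only [Gmet_p2, ite_mul, one_mul, zero_mul, Finset.sum_ite_eq', Finset.mem_univ,
      if_true, Ginv_q2]
    simp [eq_comm]
  · simp only [Gmet_ehat, add_mul, ite_mul, one_mul, zero_mul, Finset.sum_add_distrib,
      Finset.sum_ite_eq', Finset.mem_univ, if_true, Ginv_ehat, Ginv_q2]
    rcases cases_fin b with hb | hb | ⟨k, hb⟩ | hb | hb <;> subst hb <;>
      simp [eq_comm] <;> try ring
  · simp only [Gmet_q1, add_mul, ite_mul, one_mul, zero_mul, Finset.sum_add_distrib,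
      Finset.sum_ite_eq', Finset.mem_univ, if_true, Ginv_p1, Ginv_q1]
    rcases cases_fin b with hb | hb | ⟨k, hb⟩ | hb | hb <;> subst hb <;>
      simp [eq_comm] <;> try ring
  · simp only [Gmet_q2, add_mul, Finset.sum_mul, ite_mul, one_mul, zero_mul,
      Finset.sum_add_distrib, Finset.sum_ite_eq', Finset.mem_univ, if_true]
    rw [Finset.sum_comm]
    simp only [Finset.sum_ite_eq', Finset.mem_univ, if_true, Ginv_p2, Ginv_ehat, Ginv_q2]
    rcases cases_fin b with hb | hb | ⟨k, hb⟩ | hb | hb <;> subst hb <;>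
      simp [eq_comm, ehat_inj, Finset.sum_ite_eq, Finset.mul_sum, sq, mul_comm] <;>
      try ring

lemma Ginv_eq (x : Pt n) : (Gmet A x)⁻¹ = Ginv A x :=
  Matrix.inv_eq_right_inv (G_mul_Ginv A x)

end Aux

/-! #### Derivatives -/

section Deriv

variable {n N : ℕ} (A : Fin N → Matrix (Fin n) (Fin n) ℝ)

lemma pd_const (f : Pt n → ℝ) (c : ℝ) (h : ∀ y, f y = c) (b : Fin (n + 4)) (x : Pt n) :
    pd b f x = 0 := by
  have : f = fun _ => c := funext h
  simp [pd, this]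

/-- The projection killing the first two coordinates. -/
def Pmap (n : ℕ) : Pt n →L[ℝ] Pt n :=
  ContinuousLinearMap.pi fun k => if k.1 < 2 then 0 else ContinuousLinearMap.proj k

lemma Pmap_apply (y : Pt n) (k : Fin (n + 4)) :
    Pmap n y k = if k.1 < 2 then 0 else y k := by
  simp only [Pmap, ContinuousLinearMap.pi_apply]
  split_ifs <;> simp

lemma Pmap_ehat (y : Pt n) (j : Fin n) : Pmap n y (ehat j) = y (ehat j) := by
  rw [Pmap_apply]; exact if_neg (by simp [ehat])

lemma Pmap_q1 (y : Pt n) : Pmap n y (q1 n) = y (q1 n) := by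
  rw [Pmap_apply]; exact if_neg (by simp [q1])

lemma u_Pmap (i : Fin n) (y : Pt n) : u A i (Pmap n y) = u A i y := by
  unfold u; simp only [Pmap_ehat, Pmap_q1]

lemma Fq_Pmap (y : Pt n) : Fq n (Pmap n y) = Fq n y := by
  unfold Fq; simp only [Pmap_ehat]

lemma Gmet_Pmap (y : Pt n) (b c : Fin (n + 4)) :
    Gmet A (Pmap n y) b c = Gmet A y b c := by
  unfold Gmet; simp only [u_Pmap, Fq_Pmap]

lemma Pmap_single (d : Fin (n + 4)) (hd : d.1 < 2) : Pmap n (Pi.single d 1) = 0 := by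
  funext k
  rw [Pmap_apply]
  split_ifs with h
  · rfl
  · have : k ≠ d := by intro hkd; rw [hkd] at h; exact h hd
    simp [Pi.single_apply, this]

lemma diff_u (i : Fin n) : Differentiable ℝ (u A i) := by
  unfold u; fun_prop

lemma diff_Fq : Differentiable ℝ (Fq n) := by
  unfold Fq; fun_prop

lemma diff_G (b c : Fin (n + 4)) : Differentiable ℝ fun y => Gmet A y b c := by
  unfold Gmet
  apply Differentiable.add
  apply Differentiable.add
  apply Differentiable.add
  · exact differentiable_const _
  · exact differentiable_const _
  · apply Differentiable.fun_sum
    intro i _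
    by_cases h : (b = ehat i ∧ c = q2 n) ∨ (b = q2 n ∧ c = ehat i)
    · simpa [h] using diff_u A i
    · simp [h]; try exact differentiable_const _
  · by_cases h : (b = q1 n ∧ c = q1 n) ∨ (b = q2 n ∧ c = q2 n)
    · simpa [h] using diff_Fq (n := n)
    · simp [h]; try exact differentiable_const _

lemma pd_low (d : Fin (n + 4)) (hd : d.1 < 2) (b c : Fin (n + 4)) (x : Pt n) :
    pd d (fun y => Gmet A y b c) x = 0 := by
  have hcomp : (fun y => Gmet A y b c) = (fun y => Gmet A y b c) ∘ (Pmap n) := by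
    funext y; simp [Function.comp, Gmet_Pmap]
  unfold pd
  conv_lhs => rw [hcomp]
  rw [fderiv_comp x ((diff_G A b c) (Pmap n x)) ((Pmap n).differentiableAt)]
  rw [(Pmap n).fderiv]
  simp [Pmap_single d hd]

end Deriv

/-! #### Christoffel symbol computations -/

section Chr

variable {n N : ℕ} (A : Fin N → Matrix (Fin n) (Fin n) ℝ)

/-- The bracket `∂_b G_{dc} + ∂_c G_{bd} − ∂_d G_{bc}`. -/
def Cbr (d b c : Fin (n + 4)) (x : Pt n) : ℝ :=
  pd b (fun y => Gmet A y d c) x + pd c (fun y => Gmet A y b d) x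
    - pd d (fun y => Gmet A y b c) x

lemma Γchr_eq (a b c : Fin (n + 4)) (x : Pt n) :
    Γchr A a b c x = (1 / 2) * ∑ d, Ginv A x a d * Cbr A d b c x := by
  rw [Γchr, Ginv_eq]; rfl

lemma pd_row_p1 (c b : Fin (n + 4)) (x : Pt n) :
    pd b (fun y => Gmet A y (p1 n) c) x = 0 :=
  pd_const _ _ (fun y => Gmet_p1 A y c) b x

lemma pd_row_p2 (c b : Fin (n + 4)) (x : Pt n) :
    pd b (fun y => Gmet A y (p2 n) c) x = 0 :=
  pd_const _ _ (fun y => Gmet_p2 A y c) b x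

lemma pd_col_p1 (c b : Fin (n + 4)) (x : Pt n) :
    pd b (fun y => Gmet A y c (p1 n)) x = 0 :=
  pd_const _ _ (fun y => Gmet_col_p1 A y c) b x

lemma pd_col_p2 (c b : Fin (n + 4)) (x : Pt n) :
    pd b (fun y => Gmet A y c (p2 n)) x = 0 :=
  pd_const _ _ (fun y => Gmet_col_p2 A y c) b x

lemma pd_row_ehat (i : Fin n) (c : Fin (n + 4)) (hc : c ≠ q2 n) (b : Fin (n + 4)) (x : Pt n) :
    pd b (fun y => Gmet A y (ehat i) c) x = 0 :=
  pd_const _ ((if c = ehat i then 1 else 0 : ℝ))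
    (fun y => by rw [Gmet_ehat, if_neg hc, add_zero]) b x

lemma pd_p1 (b c : Fin (n + 4)) (x : Pt n) :
    pd (p1 n) (fun y => Gmet A y b c) x = 0 :=
  pd_low A (p1 n) (by simp [p1]) b c x

lemma pd_p2 (b c : Fin (n + 4)) (x : Pt n) :
    pd (p2 n) (fun y => Gmet A y b c) x = 0 :=
  pd_low A (p2 n) (by simp [p2]) b c x

lemma Cbr_p1 (b c : Fin (n + 4)) (x : Pt n) : Cbr A (p1 n) b c x = 0 := by
  rw [Cbr, pd_row_p1, pd_col_p1, pd_p1]; ring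

lemma Cbr_p2 (b c : Fin (n + 4)) (x : Pt n) : Cbr A (p2 n) b c x = 0 := by
  rw [Cbr, pd_row_p2, pd_col_p2, pd_p2]; ring

end Chr

/-- Vanishing Christoffel symbols: `Γ^î_{ĵk̂} = 0`, `Γ^î_{ĵ,n+3} = 0`,
`Γ^{n+3}_{ab} = Γ^{n+4}_{ab} = 0`, `Γ^a_{1b} = Γ^a_{2b} = 0`. -/
theorem statement4 (n N : ℕ) (hn : 1 ≤ n) (hN : 1 ≤ N)
    (A : Fin N → Matrix (Fin n) (Fin n) ℝ) (hA : ∀ α, (A α)ᵀ = -A α) :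
    (∀ (i j k : Fin n) (x : Pt n), Γchr A (ehat i) (ehat j) (ehat k) x = 0) ∧
    (∀ (i j : Fin n) (x : Pt n), Γchr A (ehat i) (ehat j) (q1 n) x = 0) ∧
    (∀ (a b : Fin (n + 4)) (x : Pt n),
      Γchr A (q1 n) a b x = 0 ∧ Γchr A (q2 n) a b x = 0) ∧
    (∀ (a b : Fin (n + 4)) (x : Pt n),
      Γchr A a (p1 n) b x = 0 ∧ Γchr A a (p2 n) b x = 0) := by
  have hehat : ∀ (i : Fin n) (b c : Fin (n+4)) (x : Pt n),
      Γchr A (ehat i) b c x = (1 / 2) * Cbr A (ehat i) b c x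
        + (1 / 2) * (-u A i x) * Cbr A (p2 n) b c x := by
    intro i b c x
    rw [Γchr_eq]
    simp only [Ginv_ehat, add_mul, ite_mul, one_mul, zero_mul, Finset.sum_add_distrib,
      Finset.sum_ite_eq', Finset.mem_univ, if_true]
    ring
  refine ⟨?_, ?_, ?_, ?_⟩
  · intro i j k x
    rw [hehat, Cbr_p2, Cbr]
    rw [pd_row_ehat A i (ehat k) (ehat_ne_q2 k),
      pd_row_ehat A j (ehat i) (ehat_ne_q2 i),
      pd_row_ehat A j (ehat k) (ehat_ne_q2 k)]
    ring
  · intro i j x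
    rw [hehat, Cbr_p2, Cbr]
    rw [pd_row_ehat A i (q1 n) q1_ne_q2,
      pd_row_ehat A j (ehat i) (ehat_ne_q2 i),
      pd_row_ehat A j (q1 n) q1_ne_q2]
    ring
  · intro a b x
    constructor
    · rw [Γchr_eq]
      simp only [Ginv_q1, ite_mul, one_mul, zero_mul, Finset.sum_ite_eq',
        Finset.mem_univ, if_true, Cbr_p1, mul_zero]
    · rw [Γchr_eq]
      simp only [Ginv_q2, ite_mul, one_mul, zero_mul, Finset.sum_ite_eq',
        Finset.mem_univ, if_true, Cbr_p2, mul_zero]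
  · intro a b x
    have h1 : ∀ d, Cbr A d (p1 n) b x = 0 := by
      intro d
      rw [Cbr, pd_p1, pd_row_p1, pd_row_p1]; ring
    have h2 : ∀ d, Cbr A d (p2 n) b x = 0 := by
      intro d
      rw [Cbr, pd_p2, pd_row_p2, pd_row_p2]; ring
    constructor <;> rw [Γchr_eq] <;>
      simp only [h1, h2, mul_zero, Finset.sum_const_zero] <;> ring

end
end HolPaper
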